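/- Let n ≥ 2, 1 ≤ k ≤ n-1, gcd(s,n) = 1, and η ∈ 𝔽_{q^n} with N_{q^n/q}(η) ≠ (-1)^{nk}, where N_{q^n/q} is the norm map from 𝔽_{q^n} to 𝔽_q. Then every nonzero element of the generalized twisted Gabidulin code H_{k,s}(η, h) = {a_0 x + a_1 x^{q^s} + ⋯ + a_{k-1} x^{q^{s(k-1)}} + η a_0^{q^{sh}} x^{q^{sk}} : a_0,…,a_{k-1} ∈ 𝔽_{q^n}}, viewed as an 𝔽_q-linear endomorphism of 𝔽_{q^n}, has kernel of 𝔽_q-dimension at most k - 1. -/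

import Mathlib

open Finset

namespace TwistedGab

/-- geometric sum identity in ℕ -/
lemma geom_nat (q : ℕ) (hq : 1 ≤ q) (t : ℕ) :
    (q - 1) * (∑ i ∈ range t, q ^ i) = q ^ t - 1 := by
  induction t with
  | zero => simp
  | succ t ih =>
    rw [sum_range_succ, Nat.mul_add, ih]
    have h1 : 1 ≤ q ^ t := Nat.one_le_pow _ _ (by omega)
    have h2 : q ^ t ≤ q ^ (t + 1) := Nat.pow_le_pow_right hq (by omega)
    have h3 : (q - 1) * q ^ t = q ^ (t + 1) - q ^ t := by
      rw [Nat.sub_mul, one_mul, ← pow_succ']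
    omega

lemma parity_nat (q : ℕ) (hq : q % 2 = 1) (t : ℕ) :
    (∑ i ∈ range t, q ^ i) % 2 = t % 2 := by
  induction t with
  | zero => simp
  | succ t ih =>
    rw [sum_range_succ]
    have : q ^ t % 2 = 1 := by
      rw [Nat.pow_mod, hq, one_pow]
      norm_num
    omega

variable {Fq K : Type*} [Field Fq] [Field K] [Fintype Fq] [Fintype K] [Algebra Fq K]

lemma fix_lemma (q s n : ℕ) (hq2 : 2 ≤ q) (hn : 1 ≤ n) (hgcd : Nat.gcd s n = 1)
    (hq : Fintype.card Fq = q) (hK : Fintype.card K = q ^ n) :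
    ∀ x : K, x ^ q ^ s = x → ∃ lam : Fq, algebraMap Fq K lam = x := by
  classical
  intro x hx
  have hxq : x ^ q = x := by
    rcases eq_or_ne x 0 with rfl | hx0
    · rw [zero_pow (by omega)]
    · have hqs1 : 1 ≤ q ^ s := Nat.one_le_pow _ _ (by omega)
      have h1 : x ^ (q ^ s - 1) = 1 := by
        have h : x ^ (q ^ s - 1) * x = 1 * x := by
          rw [← pow_succ, Nat.sub_add_cancel hqs1, hx, one_mul]
        exact mul_right_cancel₀ hx0 h
      have h2 : x ^ (q ^ n - 1) = 1 := by
        have := FiniteField.pow_card_sub_one_eq_one x hx0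
        rwa [hK] at this
      set dd := orderOf x with hdd
      have hd1 : dd ∣ q ^ s - 1 := orderOf_dvd_of_pow_eq_one h1
      have hd2 : dd ∣ q ^ n - 1 := orderOf_dvd_of_pow_eq_one h2
      have hqn1 : 1 ≤ q ^ n := Nat.one_le_pow _ _ (by omega)
      have hqn2 : 2 ≤ q ^ n := by
        calc 2 = 2 ^ 1 := by norm_num
        _ ≤ q ^ n := Nat.pow_le_pow_left hq2 1 |>.trans (Nat.pow_le_pow_right (by omega) hn)
      have hddpos : 0 < dd := by
        rcases Nat.eq_zero_or_pos dd with h0 | h0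
        · rw [h0] at hd2
          have := Nat.eq_zero_of_zero_dvd hd2
          omega
        · exact h0
      haveI : NeZero dd := ⟨by omega⟩
      have hcast : ∀ m : ℕ, dd ∣ q ^ m - 1 → ((q : ZMod dd)) ^ m = 1 := by
        intro m hm
        have h0 : ((q ^ m - 1 : ℕ) : ZMod dd) = 0 :=
          (ZMod.natCast_eq_zero_iff _ _).mpr hm
        have h1m : 1 ≤ q ^ m := Nat.one_le_pow _ _ (by omega)
        have : ((q ^ m - 1 : ℕ) : ZMod dd) = (q : ZMod dd) ^ m - 1 := by
          push_cast [Nat.cast_sub h1m]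
          ring
        rw [this] at h0
        linear_combination h0
      have hords : orderOf ((q : ZMod dd)) ∣ s := orderOf_dvd_of_pow_eq_one (hcast s hd1)
      have hordn : orderOf ((q : ZMod dd)) ∣ n := orderOf_dvd_of_pow_eq_one (hcast n hd2)
      have hord1 : orderOf ((q : ZMod dd)) = 1 := by
        have := Nat.dvd_gcd hords hordn
        rw [hgcd, Nat.dvd_one] at this
        exact this
      have hq1 : (q : ZMod dd) = 1 := orderOf_eq_one_iff.mp hord1
      have hdvd : dd ∣ q - 1 := by
        have h0 : ((q - 1 : ℕ) : ZMod dd) = 0 := by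
          push_cast [Nat.cast_sub (by omega : 1 ≤ q)]
          rw [hq1]; ring
        exact (ZMod.natCast_eq_zero_iff _ _).mp h0
      obtain ⟨e, he⟩ := hdvd
      have hxdd : x ^ dd = 1 := pow_orderOf_eq_one x
      calc x ^ q = x ^ (q - 1) * x := by
            rw [← pow_succ, Nat.sub_add_cancel (by omega : 1 ≤ q)]
        _ = (x ^ dd) ^ e * x := by rw [← pow_mul, ← he]
        _ = x := by rw [hxdd, one_pow, one_mul]
  -- root-counting step
  set A : Finset K := univ.filter (fun y => y ^ q = y) with hA
  set B : Finset K := univ.image (algebraMap Fq K) with hB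
  have hBA : B ⊆ A := by
    intro y hy
    simp only [hB, mem_image, mem_univ, true_and] at hy
    obtain ⟨lam, rfl⟩ := hy
    simp only [hA, mem_filter, mem_univ, true_and]
    rw [← map_pow]
    congr 1
    rw [← hq]
    exact FiniteField.pow_card lam
  have hcardB : B.card = q := by
    rw [hB, Finset.card_image_of_injective _ (algebraMap Fq K).injective, card_univ, hq]
  have hcardA : A.card ≤ q := by
    set P : Polynomial K := Polynomial.X ^ q - Polynomial.X with hP
    have hPne : P ≠ 0 := by
      intro h
      have h2 := congrArg (fun r => Polynomial.coeff r q) h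
      simp only [hP, Polynomial.coeff_sub, Polynomial.coeff_X_pow, Polynomial.coeff_X,
        Polynomial.coeff_zero] at h2
      rw [if_neg (by omega : ¬ (1:ℕ) = q)] at h2
      norm_num at h2
    calc A.card ≤ P.roots.toFinset.card := by
          apply Finset.card_le_card
          intro y hy
          simp only [hA, mem_filter, mem_univ, true_and] at hy
          rw [Multiset.mem_toFinset, Polynomial.mem_roots hPne]
          simp [hP, Polynomial.IsRoot, sub_eq_zero, hy]
      _ ≤ Multiset.card P.roots := Multiset.toFinset_card_le _
      _ ≤ P.natDegree := Polynomial.card_roots' _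
      _ ≤ q := by
          apply le_trans (Polynomial.natDegree_sub_le _ _)
          simp only [Polynomial.natDegree_X_pow, Polynomial.natDegree_X]
          omega
  have hAB : B = A := Finset.eq_of_subset_of_card_le hBA (by omega)
  have hxA : x ∈ A := by simp [hA, hxq]
  rw [← hAB] at hxA
  simp only [hB, mem_image, mem_univ, true_and] at hxA
  exact hxA

lemma lemA (q s : ℕ) (hq2 : 2 ≤ q)
    (hadd : ∀ (t : ℕ) (x y : K), (x + y) ^ q ^ t = x ^ q ^ t + y ^ q ^ t)
    (hsmul : ∀ (t : ℕ) (lam : Fq) (x : K), (lam • x) ^ q ^ t = lam • x ^ q ^ t)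
    (hfix : ∀ x : K, x ^ q ^ s = x → ∃ lam : Fq, algebraMap Fq K lam = x) :
    ∀ (d : ℕ) (u c : Fin (d + 1) → K), LinearIndependent Fq u →
      (∀ j, ∑ i : Fin (d + 1), c i * u j ^ q ^ (s * (i : ℕ)) = 0) → c = 0 := by
  have hqt0 : ∀ t : ℕ, q ^ t ≠ 0 := fun t => pow_ne_zero t (by omega)
  have hsub : ∀ (t : ℕ) (x y : K), (x - y) ^ q ^ t = x ^ q ^ t - y ^ q ^ t := by
    intro t x y
    have h := hadd t (x - y) y
    rw [sub_add_cancel] at h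
    exact eq_sub_of_add_eq h.symm
  let F : ℕ → (K →ₗ[Fq] K) := fun t =>
    { toFun := fun x => x ^ q ^ t
      map_add' := hadd t
      map_smul' := hsmul t }
  have hFapp : ∀ t x, F t x = x ^ q ^ t := fun _ _ => rfl
  have hFker : ∀ t, LinearMap.ker (F t) = ⊥ := by
    intro t
    ext x
    simp only [LinearMap.mem_ker, Submodule.mem_bot, hFapp]
    rw [pow_eq_zero_iff (hqt0 t)]
  intro d
  induction d with
  | zero =>
    intro u c hu hc
    have h0 := hc 0
    rw [Fin.sum_univ_one] at h0
    have hz : ((0 : Fin (0 + 1)) : ℕ) = 0 := rfl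
    rw [hz, Nat.mul_zero, pow_zero, pow_one] at h0
    have hu0 : u 0 ≠ 0 := hu.ne_zero 0
    funext i
    have hi := i.isLt
    have : i = 0 := Fin.ext (by omega)
    subst this
    simpa [hu0] using h0
  | succ d IH =>
    intro u c hu hc
    set L := u (Fin.last (d + 1)) with hLdef
    have hLne : L ≠ 0 := hu.ne_zero _
    set v : Fin (d + 2) → K := fun j => L⁻¹ * u j with hvdef
    have hvind : LinearIndependent Fq v := by
      have hker : LinearMap.ker (LinearMap.mulLeft Fq L⁻¹) = ⊥ := by
        ext x
        simp only [LinearMap.mem_ker, LinearMap.mulLeft_apply, Submodule.mem_bot,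
          mul_eq_zero, inv_eq_zero]
        constructor
        · rintro (h | h)
          · exact absurd h hLne
          · exact h
        · intro h; exact Or.inr h
      exact hu.map' (LinearMap.mulLeft Fq L⁻¹) hker
    have hvlast : v (Fin.last (d + 1)) = 1 := inv_mul_cancel₀ hLne
    set c' : Fin (d + 2) → K := fun i => c i * L ^ q ^ (s * (i : ℕ)) with hc'def
    have key : ∀ (i : Fin (d + 2)) (x : K),
        c' i * (L⁻¹ * x) ^ q ^ (s * (i : ℕ)) = c i * x ^ q ^ (s * (i : ℕ)) := by
      intro i x
      have h1 : L ^ q ^ (s * (i : ℕ)) * (L⁻¹) ^ q ^ (s * (i : ℕ)) = 1 := by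
        rw [← mul_pow, mul_inv_cancel₀ hLne, one_pow]
      calc c' i * (L⁻¹ * x) ^ q ^ (s * (i : ℕ))
          = c i * (L ^ q ^ (s * (i : ℕ)) * (L⁻¹) ^ q ^ (s * (i : ℕ))) * x ^ q ^ (s * (i : ℕ)) := by
            rw [mul_pow]; ring
        _ = c i * x ^ q ^ (s * (i : ℕ)) := by rw [h1, mul_one]
    have hc'eq : ∀ j, ∑ i : Fin (d + 2), c' i * v j ^ q ^ (s * (i : ℕ)) = 0 := by
      intro j
      rw [← hc j]
      exact Finset.sum_congr rfl (fun i _ => key i (u j))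
    have hsum0 : ∑ i : Fin (d + 2), c' i = 0 := by
      have h := hc'eq (Fin.last (d + 1))
      rw [hvlast] at h
      simpa using h
    -- ℕ-indexed coefficients and partial sums
    set c'' : ℕ → K := fun t => if h : t < d + 2 then c' ⟨t, h⟩ else 0 with hc''def
    have hc''eq : ∀ i : Fin (d + 2), c'' (i : ℕ) = c' i := by
      intro i
      simp only [hc''def, dif_pos i.isLt]
    set S : ℕ → K := fun m => ∑ t ∈ range (m + 1), c'' t with hSdef
    have hSd1 : S (d + 1) = 0 := by
      have h' : ∑ t ∈ range (d + 2), c'' t = ∑ i : Fin (d + 2), c' i := by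
        rw [← Fin.sum_univ_eq_sum_range]
        exact Finset.sum_congr rfl (fun i _ => hc''eq i)
      show ∑ t ∈ range (d + 2), c'' t = 0
      rw [h', hsum0]
    set w : Fin (d + 1) → K := fun j => v j.castSucc ^ q ^ s - v j.castSucc with hwdef
    -- linear independence of w
    have hwind : LinearIndependent Fq w := by
      rw [Fintype.linearIndependent_iff]
      intro g hg
      set Svec := ∑ j : Fin (d + 1), g j • v j.castSucc with hSvec
      have h1 : Svec ^ q ^ s = Svec := by
        have e1 : (F s) Svec = ∑ j : Fin (d + 1), g j • (v j.castSucc ^ q ^ s) := by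
          rw [hSvec, map_sum]
          exact Finset.sum_congr rfl (fun j _ => by rw [map_smul, hFapp])
        have e2 : ∑ j : Fin (d + 1), g j • (v j.castSucc ^ q ^ s) = Svec := by
          have h3 : ∑ j : Fin (d + 1), g j • (v j.castSucc ^ q ^ s)
              - ∑ j : Fin (d + 1), g j • v j.castSucc = 0 := by
            rw [← Finset.sum_sub_distrib]
            rw [← hg]
            exact Finset.sum_congr rfl (fun j _ => by rw [hwdef, smul_sub])
          have := sub_eq_zero.mp h3
          rw [this, hSvec]
        rw [← hFapp s, e1, e2]
      obtain ⟨lam, hlam⟩ := hfix Svec h1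
      have hdep : ∑ i : Fin (d + 2), (Fin.snoc g (-lam) : Fin (d + 2) → Fq) i • v i = 0 := by
        rw [Fin.sum_univ_castSucc]
        simp only [Fin.snoc_castSucc, Fin.snoc_last, hvlast]
        rw [← hSvec]
        rw [← hlam, Algebra.algebraMap_eq_smul_one]
        simp
      have hall := (Fintype.linearIndependent_iff.mp hvind) _ hdep
      intro j
      have := hall j.castSucc
      simpa using this
    -- the telescoping equations
    have hbw : ∀ j : Fin (d + 1),
        ∑ i : Fin (d + 1), (-(S (i : ℕ))) * w j ^ q ^ (s * (i : ℕ)) = 0 := by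
      intro j
      set x := v j.castSucc with hxdef
      set V : ℕ → K := fun i => x ^ q ^ (s * i) with hVdef
      have hw : ∀ i : ℕ, w j ^ q ^ (s * i) = V (i + 1) - V i := by
        intro i
        rw [hwdef]
        rw [hsub (s * i) (x ^ q ^ s) x]
        congr 1
        rw [hVdef, ← pow_mul, ← pow_add]
        congr 1
        ring
      have abel : ∀ m : ℕ, ∑ i ∈ range m, (-(S i)) * (V (i + 1) - V i)
          = ∑ i ∈ range (m + 1), c'' i * V i - S m * V m := by
        intro m
        induction m with
        | zero => simp [hSdef]
        | succ m ih =>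
          rw [sum_range_succ, ih, sum_range_succ (fun i => c'' i * V i) (m + 1)]
          have hSm : S (m + 1) = S m + c'' (m + 1) := by
            show ∑ t ∈ range (m + 1 + 1), c'' t = (∑ t ∈ range (m + 1), c'' t) + c'' (m + 1)
            exact sum_range_succ _ _
          rw [hSm]; ring
      calc ∑ i : Fin (d + 1), (-(S (i : ℕ))) * w j ^ q ^ (s * (i : ℕ))
          = ∑ i ∈ range (d + 1), (-(S i)) * (V (i + 1) - V i) := by
            rw [Fin.sum_univ_eq_sum_range (fun i => (-(S i)) * w j ^ q ^ (s * i))]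
            exact Finset.sum_congr rfl (fun i _ => by rw [hw i])
        _ = ∑ i ∈ range (d + 2), c'' i * V i - S (d + 1) * V (d + 1) := abel (d + 1)
        _ = 0 := by
            rw [hSd1, zero_mul, sub_zero]
            have : ∑ i ∈ range (d + 2), c'' i * V i
                = ∑ i : Fin (d + 2), c' i * v j.castSucc ^ q ^ (s * (i : ℕ)) := by
              rw [← Fin.sum_univ_eq_sum_range (fun i => c'' i * V i)]
              exact Finset.sum_congr rfl (fun i _ => by rw [hc''eq i])
            rw [this, hc'eq j.castSucc]
    have hb0 := IH w (fun i => -(S (i : ℕ))) hwind hbw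
    have hSzero : ∀ m, m ≤ d → S m = 0 := by
      intro m hm
      have := congrFun hb0 ⟨m, by omega⟩
      simpa using this
    have hc''zero : ∀ t, t ≤ d + 1 → c'' t = 0 := by
      intro t ht
      rcases Nat.eq_zero_or_pos t with rfl | hpos
      · have h0 : S 0 = 0 := hSzero 0 (by omega)
        rw [hSdef] at h0
        simpa using h0
      · obtain ⟨m, rfl⟩ := Nat.exists_eq_add_of_lt hpos
        rw [Nat.zero_add] at *
        have h1 : S (m + 1) = S m + c'' (m + 1) := by
          show ∑ t ∈ range (m + 1 + 1), c'' t = (∑ t ∈ range (m + 1), c'' t) + c'' (m + 1)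
          exact sum_range_succ _ _
        have h2 : S m = 0 := hSzero m (by omega)
        have h3 : S (m + 1) = 0 := by
          rcases Nat.lt_or_ge (m + 1) (d + 1) with h | h
          · exact hSzero (m + 1) (by omega)
          · have : m + 1 = d + 1 := by omega
            rw [this]; exact hSd1
        rw [h1, h2, zero_add] at h3
        exact h3
    funext i
    have hci : c' i = 0 := by
      rw [← hc''eq i]
      exact hc''zero (i : ℕ) (by omega)
    rw [hc'def] at hci
    simp only at hci
    rcases mul_eq_zero.mp hci with h | h
    · exact h
    · exact absurd h (pow_ne_zero _ hLne)

end TwistedGab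
open Matrix in
/-- nonzero elements of the generalized twisted Gabidulin code
`H_{k,s}(η,h)` have kernel of `𝔽_q`-dimension at most `k - 1`. -/
theorem twisted_gabidulin_code_MRD
    (q n k s h : ℕ) (hn : 2 ≤ n) (hk1 : 1 ≤ k) (hkn : k ≤ n - 1)
    (hgcd : Nat.gcd s n = 1)
    (Fq K : Type*) [Field Fq] [Field K] [Fintype Fq] [Fintype K] [Algebra Fq K]
    (hq : Fintype.card Fq = q) (hK : Fintype.card K = q ^ n)
    (η : K) (hη : η ^ ((q ^ n - 1) / (q - 1)) ≠ (-1 : K) ^ (n * k))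
    (a : Fin k → K) (ha : a ≠ 0) (φ : K →ₗ[Fq] K)
    (hφ : ∀ x : K, φ x = (∑ i : Fin k, a i * x ^ q ^ (s * (i : ℕ)))
        + η * (a ⟨0, hk1⟩) ^ q ^ (s * h) * x ^ q ^ (s * k)) :
    Module.finrank Fq (LinearMap.ker φ) ≤ k - 1 := by
  classical
  have hq2 : 2 ≤ q := by rw [← hq]; exact Fintype.one_lt_card
  -- characteristic facts
  obtain ⟨p, hcp⟩ := CharP.exists Fq
  haveI := hcp
  have hpp : p.Prime := CharP.char_is_prime Fq p
  haveI : Fact p.Prime := ⟨hpp⟩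
  haveI hKp : CharP K p := charP_of_injective_algebraMap (algebraMap Fq K).injective p
  obtain ⟨m, -, hqpm0⟩ := FiniteField.card Fq p
  have hqpm : q = p ^ (m : ℕ) := by rw [← hq, hqpm0]
  have hadd : ∀ (t : ℕ) (x y : K), (x + y) ^ q ^ t = x ^ q ^ t + y ^ q ^ t := by
    intro t x y
    rw [hqpm, ← pow_mul]
    exact add_pow_char_pow ..
  have hsmul : ∀ (t : ℕ) (lam : Fq) (x : K), (lam • x) ^ q ^ t = lam • x ^ q ^ t := by
    intro t lam x
    rw [Algebra.smul_def, Algebra.smul_def, mul_pow, ← map_pow]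
    congr 2
    rw [← hq]
    exact FiniteField.pow_card_pow t lam
  have hfix := TwistedGab.fix_lemma q s n hq2 (by omega) hgcd hq hK
  by_contra hcon
  push_neg at hcon
  have hkle : k ≤ Module.finrank Fq (LinearMap.ker φ) := by omega
  obtain ⟨u0, hu0⟩ := exists_linearIndependent_of_le_finrank hkle
  set u : Fin k → K := fun j => ((u0 j : K)) with hu_def
  have hu : LinearIndependent Fq u :=
    hu0.map' (LinearMap.ker φ).subtype (Submodule.ker_subtype _)
  have hueq : ∀ j, (∑ i : Fin k, a i * u j ^ q ^ (s * (i : ℕ)))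
      + η * (a ⟨0, hk1⟩) ^ q ^ (s * h) * u j ^ q ^ (s * k) = 0 := by
    intro j
    have h1 : φ (u j) = 0 := LinearMap.mem_ker.mp (u0 j).2
    rw [hφ (u j)] at h1
    exact h1
  by_cases ha0 : a ⟨0, hk1⟩ = 0
  · -- case a₀ = 0
    have hex : ∃ i : Fin k, a i ≠ 0 := by
      by_contra hno
      push_neg at hno
      exact ha (funext fun i => hno i)
    obtain ⟨i0, hi0⟩ := hex
    have hi0pos : 0 < (i0 : ℕ) := by
      rcases Nat.eq_zero_or_pos (i0 : ℕ) with h0 | h0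
      · exfalso
        apply hi0
        have : i0 = ⟨0, hk1⟩ := Fin.ext (by simpa using h0)
        rw [this]
        exact ha0
      · exact h0
    have hk2 : 2 ≤ k := by have := i0.isLt; omega
    obtain ⟨d, rfl⟩ : ∃ d, k = d + 2 := ⟨k - 2, by omega⟩
    let Fs : K →ₗ[Fq] K :=
      { toFun := fun x => x ^ q ^ s
        map_add' := hadd s
        map_smul' := hsmul s }
    have hFsker : LinearMap.ker Fs = ⊥ := by
      ext x
      simp only [LinearMap.mem_ker, Submodule.mem_bot]
      show x ^ q ^ s = 0 ↔ x = 0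
      rw [pow_eq_zero_iff (pow_ne_zero s (by omega : q ≠ 0))]
    set w : Fin (d + 1) → K :=
      fun j => u (Fin.castLE (by omega : d + 1 ≤ d + 2) j) ^ q ^ s with hwdef
    set cc : Fin (d + 1) → K := fun i => a i.succ with hccdef
    have hwind : LinearIndependent Fq w :=
      (hu.comp (Fin.castLE (by omega : d + 1 ≤ d + 2))
        (Fin.castLE_injective _)).map' Fs hFsker
    have hzero : (⟨0, hk1⟩ : Fin (d + 2)) = 0 := Fin.ext (by simp)
    have hweq : ∀ j : Fin (d + 1),
        ∑ i : Fin (d + 1), cc i * w j ^ q ^ (s * (i : ℕ)) = 0 := by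
      intro j
      set j' := Fin.castLE (by omega : d + 1 ≤ d + 2) j with hj'
      have h1 := hueq j'
      rw [ha0, zero_pow (by positivity : q ^ (s * h) ≠ 0), mul_zero, zero_mul,
        add_zero] at h1
      rw [Fin.sum_univ_succ] at h1
      rw [← hzero, ha0, zero_mul, zero_add] at h1
      rw [← h1]
      apply Finset.sum_congr rfl
      intro i _
      congr 1
      rw [hwdef]
      rw [← pow_mul, ← pow_add]
      congr 1
      rw [Fin.val_succ]
      ring
    have hcc0 := TwistedGab.lemA q s hq2 hadd hsmul hfix d w cc hwind hweq
    apply ha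
    funext i
    rcases Fin.eq_zero_or_eq_succ i with h0 | ⟨j, rfl⟩
    · rw [h0, ← hzero]
      exact ha0
    · exact congrFun hcc0 j
  · -- case a₀ ≠ 0
    obtain ⟨k', rfl⟩ : ∃ k', k = k' + 1 := ⟨k - 1, by omega⟩
    set a0 := a ⟨0, hk1⟩ with ha0def
    set M : Matrix (Fin (k' + 1)) (Fin (k' + 1)) K :=
      Matrix.of fun j i => u j ^ q ^ (s * (i : ℕ)) with hMdef
    set z : Fin (k' + 1) → K := fun j => u j ^ q ^ (s * (k' + 1)) with hzdef
    have hMapp : ∀ j i, M j i = u j ^ q ^ (s * (i : ℕ)) := fun j i => rfl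
    have hdet : M.det ≠ 0 := by
      intro h0
      obtain ⟨vv, hvne, hv⟩ := Matrix.exists_mulVec_eq_zero_iff.mpr h0
      apply hvne
      apply TwistedGab.lemA q s hq2 hadd hsmul hfix k' u vv hu
      intro j
      have h1 := congrFun hv j
      have h2 : ∑ i : Fin (k' + 1), u j ^ q ^ (s * (i : ℕ)) * vv i = 0 := by
        simpa [Matrix.mulVec, dotProduct, hMapp] using h1
      rw [← h2]
      exact Finset.sum_congr rfl fun i _ => mul_comm _ _
    have hsys : M *ᵥ a = fun j => -(η * a0 ^ q ^ (s * h) * z j) := by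
      funext j
      have hmv : (M *ᵥ a) j = ∑ i : Fin (k' + 1), a i * u j ^ q ^ (s * (i : ℕ)) := by
        simp only [Matrix.mulVec, dotProduct, hMapp]
        exact Finset.sum_congr rfl fun i _ => mul_comm _ _
      rw [hmv]
      exact eq_neg_of_add_eq_zero_left (hueq j)
    have hcram : M.det • a = Matrix.cramer M (M *ᵥ a) := by
      rw [Matrix.cramer_eq_adjugate_mulVec, Matrix.mulVec_mulVec, Matrix.adjugate_mul,
        Matrix.smul_mulVec, Matrix.one_mulVec]
    have hcomp0 : M.det * a0 = Matrix.cramer M (M *ᵥ a) ⟨0, hk1⟩ := by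
      have h1 := congrFun hcram ⟨0, hk1⟩
      simpa [ha0def] using h1
    have hrs : (fun j => -(η * a0 ^ q ^ (s * h) * z j))
        = (-(η * a0 ^ q ^ (s * h))) • z := by
      funext j
      simp [smul_eq_mul]
    rw [hsys, hrs, _root_.map_smul, Pi.smul_apply, smul_eq_mul, Matrix.cramer_apply] at hcomp0
    -- Moore shift identity
    let σs : K →+* K :=
      { toFun := fun x => x ^ q ^ s
        map_one' := one_pow _
        map_mul' := fun x y => mul_pow x y _
        map_zero' := zero_pow (pow_ne_zero s (by omega : q ≠ 0))
        map_add' := hadd s }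
    have hmap : σs.mapMatrix M = (M.updateCol ⟨0, hk1⟩ z).submatrix id (finRotate (k' + 1)) := by
      ext j i
      simp only [RingHom.mapMatrix_apply, Matrix.map_apply, Matrix.submatrix_apply, id]
      induction i using Fin.lastCases with
      | last =>
        rw [finRotate_last]
        rw [Matrix.updateCol_apply, if_pos (Fin.ext (by simp) : (0 : Fin (k'+1)) = ⟨0, hk1⟩)]
        show (u j ^ q ^ (s * ((Fin.last k' : Fin (k' + 1)) : ℕ))) ^ q ^ s = z j
        rw [hzdef, Fin.val_last, ← pow_mul, ← pow_add,
          show s * k' + s = s * (k' + 1) from by ring]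
      | cast i0 =>
        rw [finRotate_succ_apply, Fin.coeSucc_eq_succ]
        have hne : (i0.succ : Fin (k' + 1)) ≠ ⟨0, hk1⟩ := by
          intro hcontra
          have := Fin.succ_ne_zero i0
          apply this
          rw [hcontra]
          exact Fin.ext (by simp)
        rw [Matrix.updateCol_apply, if_neg hne]
        show (u j ^ q ^ (s * ((i0.castSucc : Fin (k' + 1)) : ℕ))) ^ q ^ s
            = u j ^ q ^ (s * ((i0.succ : Fin (k' + 1)) : ℕ))
        rw [Fin.coe_castSucc, Fin.val_succ, ← pow_mul, ← pow_add,
          show s * (i0 : ℕ) + s = s * ((i0 : ℕ) + 1) from by ring]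
    have hsq : ∀ mm : ℕ, (-1 : K) ^ mm * (-1 : K) ^ mm = 1 := by
      intro mm
      rw [← mul_pow]
      norm_num
    have hdet2 : M.det ^ q ^ s = (-1 : K) ^ k' * (M.updateCol ⟨0, hk1⟩ z).det := by
      have h1 : σs M.det = (σs.mapMatrix M).det := σs.map_det M
      rw [hmap, Matrix.det_permute', sign_finRotate] at h1
      have h2 : σs M.det = M.det ^ q ^ s := rfl
      rw [h2] at h1
      rw [h1]
      congr 1
      push_cast
      simp
    have hupdet : (M.updateCol ⟨0, hk1⟩ z).det = (-1 : K) ^ k' * M.det ^ q ^ s := by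
      rw [hdet2, ← mul_assoc, hsq, one_mul]
    have hmain : M.det * a0 = -((-1 : K) ^ k') * η * a0 ^ q ^ (s * h) * M.det ^ q ^ s := by
      rw [hcomp0, hupdet]
      ring
    -- norm computation
    set E := ∑ i ∈ Finset.range n, q ^ i with hEdef2
    have hEdiv : (q ^ n - 1) / (q - 1) = E := by
      apply Nat.div_eq_of_eq_mul_left (by omega : 0 < q - 1)
      rw [mul_comm]
      exact (TwistedGab.geom_nat q (by omega) n).symm
    have hKpow : ∀ x : K, x ≠ 0 → x ^ (q ^ n - 1) = 1 := by
      intro x hx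
      have := FiniteField.pow_card_sub_one_eq_one x hx
      rwa [hK] at this
    have hpE : ∀ (x : K), x ≠ 0 → ∀ t : ℕ, (x ^ q ^ t) ^ E = x ^ E := by
      intro x hx t
      rw [← pow_mul]
      have harith : q ^ t * E = E + (q ^ n - 1) * (∑ i ∈ Finset.range t, q ^ i) := by
        have h1 := TwistedGab.geom_nat q (by omega) t
        have h2 := TwistedGab.geom_nat q (by omega) n
        have h3 : 1 ≤ q ^ t := Nat.one_le_pow _ _ (by omega)
        calc q ^ t * E = (1 + (q ^ t - 1)) * E := by congr 1; omega
          _ = E + (q ^ t - 1) * E := by ring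
          _ = E + ((q - 1) * ∑ i ∈ Finset.range t, q ^ i) * E := by rw [h1]
          _ = E + ((q - 1) * E) * (∑ i ∈ Finset.range t, q ^ i) := by ring
          _ = E + (q ^ n - 1) * (∑ i ∈ Finset.range t, q ^ i) := by rw [h2]
      rw [harith, pow_add, pow_mul, hKpow x hx, one_pow, mul_one]
    have hDne : M.det ≠ 0 := hdet
    have ha0E : a0 ^ E ≠ 0 := pow_ne_zero _ ha0
    have hDE : M.det ^ E ≠ 0 := pow_ne_zero _ hDne
    have hT : (-(-1 : K) ^ k') ^ E = (-1 : K) ^ ((k' + 1) * E) := by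
      rw [show (-(-1 : K) ^ k') = (-1 : K) ^ (k' + 1) from by rw [pow_succ]; ring,
        ← pow_mul]
    have hEeq : η ^ E = (-1 : K) ^ ((k' + 1) * E) := by
      have h1 := congrArg (fun x : K => x ^ E) hmain
      rw [mul_pow, mul_pow, mul_pow, mul_pow, hpE a0 ha0 (s * h), hpE M.det hDne s] at h1
      rw [hT] at h1
      -- h1 : M.det ^ E * a0 ^ E = (-1)^((k'+1)*E) * η ^ E * a0 ^ E * M.det ^ E
      have h2 : ((-1 : K) ^ ((k' + 1) * E) * η ^ E - 1) * (a0 ^ E * M.det ^ E) = 0 := by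
        linear_combination -h1
      rcases mul_eq_zero.mp h2 with h3 | h3
      · have h4 : (-1 : K) ^ ((k' + 1) * E) * η ^ E = 1 := by
          linear_combination h3
        calc η ^ E = ((-1 : K) ^ ((k' + 1) * E) * (-1 : K) ^ ((k' + 1) * E)) * η ^ E := by
              rw [hsq]; ring
          _ = (-1 : K) ^ ((k' + 1) * E) * ((-1 : K) ^ ((k' + 1) * E) * η ^ E) := by ring
          _ = (-1 : K) ^ ((k' + 1) * E) := by rw [h4, mul_one]
      · exact absurd h3 (mul_ne_zero ha0E hDE)
    apply hη
    rw [hEdiv, hEeq]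
    by_cases hone : (-1 : K) = 1
    · rw [hone, one_pow, one_pow]
    · have hqodd : q % 2 = 1 := by
        by_contra hev
        have h2q : (2 : ℕ) ∣ q := by omega
        have hp2 : p = 2 := by
          have hd : (2 : ℕ) ∣ p ^ (m : ℕ) := by rw [← hqpm]; exact h2q
          have := Nat.Prime.dvd_of_dvd_pow Nat.prime_two hd
          exact ((Nat.prime_dvd_prime_iff_eq Nat.prime_two hpp).mp this).symm
        apply hone
        haveI hK2 : CharP K 2 := hp2 ▸ hKp
        exact CharTwo.neg_eq 1
      have hEn : E % 2 = n % 2 := TwistedGab.parity_nat q hqodd n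
      have hmod : ((k' + 1) * E) % 2 = (n * (k' + 1)) % 2 := by
        conv_lhs => rw [Nat.mul_mod, hEn, ← Nat.mul_mod]
        rw [Nat.mul_comm]
      rcases Nat.even_or_odd ((k' + 1) * E) with he | ho
      · have h2 : Even (n * (k' + 1)) := by
          rw [Nat.even_iff] at *
          omega
        rw [he.neg_one_pow, h2.neg_one_pow]
      · have h2 : Odd (n * (k' + 1)) := by
          rw [Nat.odd_iff] at *
          omega
        rw [ho.neg_one_pow, h2.neg_one_pow]
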